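/- Let ω₁₁, ω₁₃, ω₃₃ ∈ ℂ with ω₁₁ real, 0 ≤ ω₁₁ ≤ 1, satisfying: (i) |ω₁₁x₁ + ω₁₃x₃|² + 3|ω₁₃x₁ + ω₃₃x₃|² ≤ |x₁|² + |x₃|²/3 for all x₁, x₃ ∈ ℂ, and (ii) |2ω₁₃ − ω₁₁²| ≤ 1. Then |ω₃₃ + 2ω₁₁ω₁₃| ≤ √133/15. -/

import Mathlib

theorem stmt_10 (ω₁₁ : ℝ) (h0 : 0 ≤ ω₁₁) (h1 : ω₁₁ ≤ 1) (ω₁₃ ω₃₃ : ℂ)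
    (hGrunsky : ∀ x₁ x₃ : ℂ, ‖(ω₁₁ : ℂ)*x₁ + ω₁₃*x₃‖^2
        + 3 * ‖ω₁₃*x₁ + ω₃₃*x₃‖^2
        ≤ ‖x₁‖^2 + ‖x₃‖^2 / 3)
    (hcl : ‖2*ω₁₃ - (ω₁₁ : ℂ)^2‖ ≤ 1) :
    ‖ω₃₃ + 2*(ω₁₁ : ℂ)*ω₁₃‖ ≤ Real.sqrt 133 / 15 := by
  have habs : ∀ z : ℂ, ‖z‖ ^ 2 = z.re^2 + z.im^2 := by
    intro z; rw [Complex.sq_norm, Complex.normSq_apply]; ring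
  have key := hGrunsky (((2*ω₁₁ : ℝ) : ℂ)) 1
  rw [habs, habs, habs, habs] at key
  simp only [Complex.add_re, Complex.add_im, Complex.mul_re, Complex.mul_im,
    Complex.ofReal_re, Complex.ofReal_im, Complex.one_re, Complex.one_im,
    Complex.re_ofNat, Complex.im_ofNat, Complex.sub_re, Complex.sub_im] at key
  have hclsq : ‖2*ω₁₃ - ((ω₁₁^2 : ℝ) : ℂ)‖^2 ≤ 1 := by
    have e : 2*ω₁₃ - ((ω₁₁^2 : ℝ) : ℂ) = 2*ω₁₃ - (ω₁₁ : ℂ)^2 := by push_cast; ring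
    rw [e]
    have h := norm_nonneg (2*ω₁₃ - (ω₁₁ : ℂ)^2); nlinarith
  rw [habs] at hclsq
  simp only [Complex.add_re, Complex.add_im, Complex.mul_re, Complex.mul_im,
    Complex.ofReal_re, Complex.ofReal_im, Complex.one_re, Complex.one_im,
    Complex.re_ofNat, Complex.im_ofNat, Complex.sub_re, Complex.sub_im] at hclsq
  have hF2 := habs (ω₃₃ + 2*(ω₁₁ : ℂ)*ω₁₃)
  simp only [Complex.add_re, Complex.add_im, Complex.mul_re, Complex.mul_im,
    Complex.ofReal_re, Complex.ofReal_im, Complex.one_re, Complex.one_im,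
    Complex.re_ofNat, Complex.im_ofNat] at hF2
  have ht2 := habs ω₁₃
  set t := ‖ω₁₃‖ with htd
  set F := ‖ω₃₃ + 2*(ω₁₁ : ℂ)*ω₁₃‖ with hFd
  have ht0 : 0 ≤ t := norm_nonneg _
  have hF0 : 0 ≤ F := norm_nonneg _
  have hre : -t ≤ ω₁₃.re := by
    have h := Complex.abs_re_le_norm ω₁₃
    have h2 := neg_abs_le ω₁₃.re
    rw [← htd] at h
    linarith
  -- key inequality in real form
  have h3 : 3 * F^2 ≤ 133/75 := by
    rcases le_or_gt (2*t + ω₁₁^2) 1 with h | h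
    · nlinarith [sq_nonneg (2*ω₁₁^2 - t - 4/5),
        mul_nonneg (sq_nonneg ω₁₁) (by linarith : (0:ℝ) ≤ ω₁₃.re + t), sq_nonneg t]
    · nlinarith [mul_nonneg (by linarith : (0:ℝ) ≤ 2*t - (1 - ω₁₁^2))
        (by nlinarith : (0:ℝ) ≤ 2*t + (1 - ω₁₁^2)), sq_nonneg (ω₁₁^2 - 13/25)]
  have hF2le : F^2 ≤ 133/225 := by linarith
  calc F = Real.sqrt (F^2) := by rw [Real.sqrt_sq hF0]
    _ ≤ Real.sqrt (133/225) := Real.sqrt_le_sqrt hF2le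
    _ = Real.sqrt 133 / 15 := by
        rw [show (133:ℝ)/225 = 133 * (1/15)^2 by norm_num,
          Real.sqrt_mul (by norm_num : (0:ℝ) ≤ 133), Real.sqrt_sq (by norm_num : (0:ℝ) ≤ 1/15)]
        ring
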